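/- The set of points (x,y) in the open triangle Δ = {(x,y) ∈ ℝ² : 1 > x > y > 0} for which there exists a sequence i : ℕ → {0,1} with (x,y) ∈ Δ_{(e,e,e)}(i₁,…,iₙ) for every n ≥ 1 and lim_{n→∞} (1/n)·#{k ≤ n : i_k = 1} = 1/2, has two-dimensional Lebesgue measure zero. (This is the key step showing that the Minkowski question mark analog Φ(e,e,e) is singular.) -/

import Mathlib

open Matrix MeasureTheory Filter

noncomputable section

/-- Projection π(a,b,c) = (b/a, c/a). -/
def projPt (v : Fin 3 → ℝ) : ℝ × ℝ := (v 1 / v 0, v 2 / v 0)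

def Vmat : Matrix (Fin 3) (Fin 3) ℝ := !![1,1,1; 0,1,1; 0,0,1]

def prodSeq (C : Fin 2 → Matrix (Fin 3) (Fin 3) ℝ) (i : ℕ → Fin 2) :
    ℕ → Matrix (Fin 3) (Fin 3) ℝ
  | 0 => 1
  | n + 1 => prodSeq C i n * C (i (n + 1))

/-- The subtriangle: convex hull of the π-images of the columns of V·C_{i₁}⋯C_{iₙ}. -/
def subTri (C : Fin 2 → Matrix (Fin 3) (Fin 3) ℝ) (i : ℕ → Fin 2) (n : ℕ) :
    Set (ℝ × ℝ) :=
  convexHull ℝ (Set.range fun j : Fin 3 => projPt fun k => (Vmat * prodSeq C i n) k j)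

/-- The Farey matrices F₀(e,e,e), F₁(e,e,e). -/
def Feee : Fin 2 → Matrix (Fin 3) (Fin 3) ℝ :=
  ![!![0,0,1; 1,0,0; 0,1,1], !![1,0,1; 0,1,0; 0,0,1]]

/-! ### Auxiliary development -/

/-- Weight of a state `(a,b,c)` of first-row entries. -/
def Wt (p : ℝ × ℝ × ℝ) : ℝ :=
  max (20 * p.2.2) (17 * p.2.2 + 6 * p.1) / (20 * p.1 * p.2.1 * p.2.2 ^ 2)

/-- One digit step on states. -/
def stp (d : Fin 2) (p : ℝ × ℝ × ℝ) : ℝ × ℝ × ℝ :=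
  if d = 0 then (p.2.1, p.2.2, p.1 + p.2.2) else (p.1, p.2.1, p.1 + p.2.2)

/-- The invariant region. -/
def Pinv (p : ℝ × ℝ × ℝ) : Prop :=
  0 < p.1 ∧ 0 < p.2.1 ∧ p.1 ≤ p.2.2 ∧ p.2.1 ≤ p.2.2

lemma Pinv_stp (d : Fin 2) (p : ℝ × ℝ × ℝ) (h : Pinv p) : Pinv (stp d p) := by
  obtain ⟨a, b, c⟩ := p
  obtain ⟨ha, hb, hac, hbc⟩ := h
  simp only at ha hb hac hbc
  have hc : 0 < c := lt_of_lt_of_le hb hbc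
  fin_cases d <;> refine ⟨?_, ?_, ?_, ?_⟩ <;> simp [stp] <;> linarith

lemma Wt_pos (p : ℝ × ℝ × ℝ) (h : Pinv p) : 0 < Wt p := by
  obtain ⟨a, b, c⟩ := p
  obtain ⟨ha, hb, hac, hbc⟩ := h
  simp only at ha hb hac hbc
  have hc : 0 < c := lt_of_lt_of_le hb hbc
  apply div_pos (lt_of_lt_of_le (by positivity) (le_max_left _ _)) (by positivity)

lemma key (a b c : ℝ) (ha : 0 < a) (hb : 0 < b) (hac : a ≤ c) (hbc : b ≤ c) :
    2 * Wt (b, c, a + c) + Wt (a, b, a + c) ≤ (69 / 50) * Wt (a, b, c) := by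
  have hc : 0 < c := lt_of_lt_of_le hb hbc
  have hs : 0 < a + c := by linarith
  set D : ℝ := 20 * a * b * c ^ 2 * (a + c) ^ 2 with hD
  have hDpos : (0:ℝ) < D := by positivity
  have e2 : Wt (a, b, a + c) = 20 * (a + c) * c ^ 2 / D := by
    unfold Wt
    rw [max_eq_left (by dsimp; linarith)]
    dsimp only
    rw [div_eq_div_iff (by positivity) hDpos.ne']
    ring
  have e1 : Wt (b, c, a + c) ≤ (17 * a + 23 * c) * (a * c) / D := by
    unfold Wt
    have h1 : max (20 * (a + c)) (17 * (a + c) + 6 * b) ≤ 17 * a + 23 * c :=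
      max_le (by linarith) (by linarith)
    calc max (20 * (b, c, a+c).2.2) (17 * (b, c, a+c).2.2 + 6 * (b, c, a+c).1) /
          (20 * (b, c, a+c).1 * (b, c, a+c).2.1 * (b, c, a+c).2.2 ^ 2)
        = max (20 * (a + c)) (17 * (a + c) + 6 * b) / (20 * b * c * (a + c) ^ 2) := by norm_num
      _ ≤ (17 * a + 23 * c) / (20 * b * c * (a + c) ^ 2) := by gcongr
      _ = (17 * a + 23 * c) * (a * c) / D := by
          rw [div_eq_div_iff (by positivity) hDpos.ne']; ring
  have core : 2 * ((17 * a + 23 * c) * (a * c)) + 20 * (a + c) * c ^ 2 ≤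
      (69 / 50) * (max (20 * c) (17 * c + 6 * a) * (a + c) ^ 2) := by
    rcases le_total (2 * a) c with h2 | h2
    · rw [max_eq_left (by linarith)]
      nlinarith [mul_nonneg (sub_nonneg.2 h2) hc.le, mul_nonneg (sub_nonneg.2 h2) ha.le,
        mul_nonneg (mul_nonneg (sub_nonneg.2 h2) hc.le) hc.le, sq_nonneg (c - 2 * a),
        mul_nonneg (mul_nonneg (sub_nonneg.2 h2) ha.le) hc.le]
    · rw [max_eq_right (by linarith)]
      nlinarith [mul_nonneg (mul_nonneg (sub_nonneg.2 h2) (sub_nonneg.2 hac)) ha.le,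
        mul_nonneg (mul_nonneg (sub_nonneg.2 h2) (sub_nonneg.2 hac)) hc.le,
        mul_nonneg (mul_nonneg (sub_nonneg.2 h2) (sub_nonneg.2 h2)) ha.le,
        mul_nonneg (mul_nonneg (sub_nonneg.2 h2) (sub_nonneg.2 h2)) hc.le,
        mul_nonneg (mul_nonneg (sub_nonneg.2 hac) (sub_nonneg.2 hac)) ha.le,
        mul_nonneg (mul_nonneg (sub_nonneg.2 hac) (sub_nonneg.2 hac)) hc.le]
  have eR : (69 / 50) * Wt (a, b, c) =
      (69 / 50) * (max (20 * c) (17 * c + 6 * a) * (a + c) ^ 2) / D := by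
    unfold Wt
    dsimp only
    rw [hD, mul_div_assoc]
    congr 1
    rw [div_eq_div_iff (by positivity : (20*a*b*c^2:ℝ) ≠ 0)
      (by positivity : (20*a*b*c^2*(a+c)^2:ℝ) ≠ 0)]
    ring
  calc 2 * Wt (b, c, a + c) + Wt (a, b, a + c)
      ≤ 2 * ((17 * a + 23 * c) * (a * c) / D) + 20 * (a + c) * c ^ 2 / D := by
        rw [e2]; gcongr
    _ = (2 * ((17 * a + 23 * c) * (a * c)) + 20 * (a + c) * c ^ 2) / D := by ring
    _ ≤ (69 / 50) * (max (20 * c) (17 * c + 6 * a) * (a + c) ^ 2) / D := by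
        exact (div_le_div_iff_of_pos_right hDpos).mpr core
    _ = (69 / 50) * Wt (a, b, c) := eR.symm

lemma key' (p : ℝ × ℝ × ℝ) (h : Pinv p) :
    2 * Wt (stp 0 p) + Wt (stp 1 p) ≤ (69 / 50) * Wt p := by
  obtain ⟨a, b, c⟩ := p
  obtain ⟨ha, hb, hac, hbc⟩ := h
  simp only at ha hb hac hbc
  simpa [stp] using key a b c ha hb hac hbc

/-- State after reading a word (most recent digit first). -/
def stL : List (Fin 2) → ℝ × ℝ × ℝ
  | [] => (1, 1, 1)
  | d :: l => stp d (stL l)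

lemma Pinv_stL (l : List (Fin 2)) : Pinv (stL l) := by
  induction l with
  | nil => exact ⟨one_pos, one_pos, le_refl _, le_refl _⟩
  | cons d l ih => exact Pinv_stp d _ ih

/-- Matrix product of a word (most recent digit first). -/
def MatL : List (Fin 2) → Matrix (Fin 3) (Fin 3) ℝ
  | [] => 1
  | d :: l => MatL l * Feee d

lemma det_Feee (d : Fin 2) : (Feee d).det = 1 := by
  fin_cases d <;> norm_num [Feee, Matrix.det_fin_three, Matrix.vecHead, Matrix.vecTail, Matrix.cons_val_two]

lemma det_MatL (l : List (Fin 2)) : (MatL l).det = 1 := by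
  induction l with
  | nil => simp [MatL]
  | cons d l ih => rw [MatL, Matrix.det_mul, ih, det_Feee, mul_one]

lemma row0_MatL (l : List (Fin 2)) :
    stL l = ((Vmat * MatL l) 0 0, (Vmat * MatL l) 0 1, (Vmat * MatL l) 0 2) := by
  induction l with
  | nil =>
      simp only [MatL, Matrix.mul_one, stL]
      norm_num [Vmat, Prod.ext_iff, Matrix.cons_val_two]
  | cons d l ih =>
      have h : Vmat * MatL (d :: l) = (Vmat * MatL l) * Feee d := by
        rw [MatL, ← Matrix.mul_assoc]
      rw [stL, ih, h]
      fin_cases d <;>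
        refine Prod.ext_iff.2 ⟨?_, Prod.ext_iff.2 ⟨?_, ?_⟩⟩ <;>
        · simp only [stp, Fin.isValue, reduceIte]
          conv_rhs => rw [Matrix.mul_apply, Fin.sum_univ_three]
          norm_num [Feee, Matrix.vecHead, Matrix.vecTail, Matrix.cons_val_two]

/-- The triangle of a word. -/
def TriL (l : List (Fin 2)) : Set (ℝ × ℝ) :=
  convexHull ℝ (Set.range fun j : Fin 3 => projPt fun k => (Vmat * MatL l) k j)

open Pointwise in
lemma vol_TriL (l : List (Fin 2)) :
    volume (TriL l) ≤ ENNReal.ofReal (Wt (stL l)) := by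
  set N : Matrix (Fin 3) (Fin 3) ℝ := Vmat * MatL l with hN
  obtain ⟨ha, hb, hac, hbc⟩ := Pinv_stL l
  rw [row0_MatL l] at ha hb hac hbc
  simp only at ha hb hac hbc
  have hc : (0:ℝ) < N 0 2 := lt_of_lt_of_le hb hbc
  have hdetV : Vmat.det = 1 := by norm_num [Vmat, Matrix.det_fin_three, Matrix.vecHead, Matrix.vecTail, Matrix.cons_val_two]
  have hdetN : N.det = 1 := by rw [hN, Matrix.det_mul, hdetV, det_MatL, mul_one]
  set p : Fin 3 → ℝ × ℝ := fun j => projPt fun k => N k j with hp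
  set u : ℝ × ℝ := p 1 - p 0 with hu
  set v : ℝ × ℝ := p 2 - p 0 with hv
  set B := Module.Basis.finTwoProd ℝ
  set L := Matrix.toLin B B !![u.1, v.1; u.2, v.2] with hL
  have hLapp : ∀ x : ℝ × ℝ, L x = (x.1 * u.1 + x.2 * v.1, x.1 * u.2 + x.2 * v.2) := by
    intro x
    rw [hL, Matrix.toLin_apply]
    simp [B, Module.Basis.coe_finTwoProd_repr, Fin.sum_univ_two, Matrix.mulVec, dotProduct,
      Module.Basis.finTwoProd_zero, Module.Basis.finTwoProd_one]
    constructor <;> ring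
  set box : Set (ℝ × ℝ) := (Set.Icc (0:ℝ) 1) ×ˢ (Set.Icc (0:ℝ) 1) with hbox
  have hsub : TriL l ⊆ (p 0) +ᵥ (L '' box) := by
    apply convexHull_min
    · rintro - ⟨j, rfl⟩
      fin_cases j
      · refine Set.mem_vadd_set.2 ⟨L (0, 0), ⟨(0,0), by
          constructor <;> norm_num [hbox], rfl⟩, ?_⟩
        rw [hLapp]
        show p 0 + _ = p 0
        norm_num
      · refine Set.mem_vadd_set.2 ⟨L (1, 0), ⟨(1,0), by
          constructor <;> norm_num [hbox], rfl⟩, ?_⟩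
        rw [hLapp]
        show p 0 + _ = p 1
        rw [show ((1:ℝ) * u.1 + 0 * v.1, (1:ℝ) * u.2 + 0 * v.2) = u by norm_num]
        rw [hu]; abel
      · refine Set.mem_vadd_set.2 ⟨L (0, 1), ⟨(0,1), by
          constructor <;> norm_num [hbox], rfl⟩, ?_⟩
        rw [hLapp]
        show p 0 + _ = p 2
        rw [show ((0:ℝ) * u.1 + 1 * v.1, (0:ℝ) * u.2 + 1 * v.2) = v by norm_num]
        rw [hv]; abel
    · exact ((((convex_Icc _ _).prod (convex_Icc _ _)).linear_image L)).vadd _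
  have hdetL : LinearMap.det L = 1 / (N 0 0 * N 0 1 * N 0 2) := by
    rw [hL, LinearMap.det_toLin, Matrix.det_fin_two]
    have expand : (u.1 * v.2 - v.1 * u.2) * (N 0 0 * N 0 1 * N 0 2) = N.det := by
      rw [Matrix.det_fin_three]
      simp only [hu, hv, hp, projPt, Prod.fst_sub, Prod.snd_sub]
      have h00 : N 0 0 ≠ 0 := ha.ne'
      have h01 : N 0 1 ≠ 0 := hb.ne'
      field_simp
      ring
    have : u.1 * v.2 - v.1 * u.2 = 1 / (N 0 0 * N 0 1 * N 0 2) := by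
      rw [eq_div_iff (by positivity)]
      rw [expand, hdetN]
    simpa using this
  calc volume (TriL l) ≤ volume ((p 0) +ᵥ (L '' box)) := measure_mono hsub
    _ = volume (L '' box) := measure_vadd volume _ _
    _ = ENNReal.ofReal |LinearMap.det L| * volume box := Measure.addHaar_image_linearMap _ L box
    _ = ENNReal.ofReal |LinearMap.det L| := by
        rw [hbox, Measure.volume_eq_prod, Measure.prod_prod, Real.volume_Icc]
        norm_num
    _ ≤ ENNReal.ofReal (Wt (stL l)) := by
        apply ENNReal.ofReal_le_ofReal
        rw [hdetL, abs_of_pos (by positivity)]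
        rw [row0_MatL l]
        show _ ≤ Wt ((Vmat * MatL l) 0 0, (Vmat * MatL l) 0 1, (Vmat * MatL l) 0 2)
        unfold Wt
        dsimp only
        calc 1 / (N 0 0 * N 0 1 * N 0 2)
            = 20 * N 0 2 / (20 * N 0 0 * N 0 1 * N 0 2 ^ 2) := by
              rw [div_eq_div_iff (by positivity) (by positivity)]; ring
          _ ≤ _ := by gcongr; exact le_max_left _ _

/-- Sum of weighted weights over all words of length `n`. -/
lemma sum_bound (n : ℕ) :
    ∑ f : Fin n → Fin 2, (2:ℝ) ^ ((List.ofFn f).count 0) * Wt (stL (List.ofFn f)) ≤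
      (69 / 50) ^ n * (23 / 20) := by
  induction n with
  | zero =>
      have h1 : ∀ f : Fin 0 → Fin 2,
          (2:ℝ) ^ ((List.ofFn f).count 0) * Wt (stL (List.ofFn f)) = 23 / 20 := by
        intro f
        rw [List.ofFn_zero]
        show (2:ℝ) ^ (0:ℕ) * Wt (1, 1, 1) = 23 / 20
        norm_num [Wt, max_def]
      rw [Finset.sum_congr rfl (fun f _ => h1 f)]
      simp
  | succ n ih =>
      have hcons : ∀ (d : Fin 2) (g : Fin n → Fin 2),
          List.ofFn (Fin.cons d g : Fin (n+1) → Fin 2) = d :: List.ofFn g := by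
        intro d g
        rw [List.ofFn_succ]
        simp
      rw [← ((Fin.consEquiv (fun _ : Fin (n+1) => Fin 2)).sum_comp
        (fun f => (2:ℝ) ^ ((List.ofFn f).count 0) * Wt (stL (List.ofFn f))))]
      rw [Fintype.sum_prod_type]
      simp only [Fin.consEquiv, Equiv.coe_fn_mk, hcons]
      rw [Fin.sum_univ_two]
      have step : ∀ g : Fin n → Fin 2,
          (2:ℝ) ^ (((0:Fin 2) :: List.ofFn g).count 0) * Wt (stL (0 :: List.ofFn g)) +
          (2:ℝ) ^ (((1:Fin 2) :: List.ofFn g).count 0) * Wt (stL (1 :: List.ofFn g)) ≤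
          (69 / 50) * ((2:ℝ) ^ ((List.ofFn g).count 0) * Wt (stL (List.ofFn g))) := by
        intro g
        have h0 : ((0:Fin 2) :: List.ofFn g).count 0 = (List.ofFn g).count 0 + 1 := by
          simp [List.count_cons]
        have h1 : ((1:Fin 2) :: List.ofFn g).count 0 = (List.ofFn g).count 0 := by
          simp [List.count_cons]
        rw [h0, h1]
        have hk := key' (stL (List.ofFn g)) (Pinv_stL _)
        have e0 : stL ((0:Fin 2) :: List.ofFn g) = stp 0 (stL (List.ofFn g)) := rfl
        have e1 : stL ((1:Fin 2) :: List.ofFn g) = stp 1 (stL (List.ofFn g)) := rfl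
        rw [e0, e1, pow_succ]
        have hpow : (0:ℝ) < (2:ℝ) ^ ((List.ofFn g).count 0) := by positivity
        nlinarith [hk, hpow]
      rw [← Finset.sum_add_distrib]
      calc ∑ g : Fin n → Fin 2, _ ≤ ∑ g : Fin n → Fin 2,
            (69 / 50) * ((2:ℝ) ^ ((List.ofFn g).count 0) * Wt (stL (List.ofFn g))) :=
          Finset.sum_le_sum (fun g _ => step g)
        _ = (69 / 50) * ∑ g : Fin n → Fin 2,
            (2:ℝ) ^ ((List.ofFn g).count 0) * Wt (stL (List.ofFn g)) := by
          rw [Finset.mul_sum]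
        _ ≤ (69 / 50) * ((69 / 50) ^ n * (23 / 20)) := by
          apply mul_le_mul_of_nonneg_left ih (by norm_num)
        _ = (69 / 50) ^ (n + 1) * (23 / 20) := by ring

lemma exists_ofFn {α : Type*} (l : List α) (n : ℕ) (h : l.length = n) :
    ∃ f : Fin n → α, List.ofFn f = l := by
  subst h
  exact ⟨l.get, List.ofFn_get l⟩

/-- Words of the sequence. -/
def wd (i : ℕ → Fin 2) : ℕ → List (Fin 2)
  | 0 => []
  | n + 1 => i (n + 1) :: wd i n

lemma wd_length (i : ℕ → Fin 2) (n : ℕ) : (wd i n).length = n := by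
  induction n with
  | zero => rfl
  | succ n ih => simp [wd, ih]

lemma prodSeq_eq_MatL (i : ℕ → Fin 2) (n : ℕ) : prodSeq Feee i n = MatL (wd i n) := by
  induction n with
  | zero => rfl
  | succ n ih => rw [prodSeq, wd, MatL, ih]

lemma subTri_eq_TriL (i : ℕ → Fin 2) (n : ℕ) : subTri Feee i n = TriL (wd i n) := by
  unfold subTri TriL
  rw [prodSeq_eq_MatL]

lemma count_one_wd (i : ℕ → Fin 2) (n : ℕ) :
    (wd i n).count 1 = ((Finset.range n).filter fun k => i (k + 1) = 1).card := by
  induction n with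
  | zero => rfl
  | succ n ih =>
      rw [Finset.range_add_one, Finset.filter_insert]
      by_cases h : i (n + 1) = 1
      · rw [if_pos h, Finset.card_insert_of_notMem (by simp)]
        simp [wd, List.count_cons, h, ih]
      · rw [if_neg h]
        simp [wd, List.count_cons, h, ih]

lemma count_add (l : List (Fin 2)) : l.count 0 + l.count 1 = l.length := by
  induction l with
  | nil => rfl
  | cons d l ih =>
      fin_cases d <;> simp [List.count_cons, ← ih] <;> omega

/-- The covering set at stage `m` (with word length `32 m`). -/
def UU (m : ℕ) : Set (ℝ × ℝ) :=
  ⋃ f ∈ Finset.univ.filter (fun f : Fin (32 * m) → Fin 2 => (List.ofFn f).count 1 ≤ 17 * m),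
    TriL (List.ofFn f)

lemma vol_UU (m : ℕ) :
    volume (UU m) ≤ ENNReal.ofReal ((23 / 20) * (((69:ℝ) / 50) ^ 32 / 2 ^ 15) ^ m) := by
  classical
  set s := Finset.univ.filter
    (fun f : Fin (32 * m) → Fin 2 => (List.ofFn f).count 1 ≤ 17 * m) with hs
  calc volume (UU m) ≤ ∑ f ∈ s, volume (TriL (List.ofFn f)) := measure_biUnion_finset_le s _
    _ ≤ ∑ f ∈ s, ENNReal.ofReal (Wt (stL (List.ofFn f))) :=
        Finset.sum_le_sum (fun f _ => vol_TriL _)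
    _ = ENNReal.ofReal (∑ f ∈ s, Wt (stL (List.ofFn f))) :=
        (ENNReal.ofReal_sum_of_nonneg (fun f _ => (Wt_pos _ (Pinv_stL _)).le)).symm
    _ ≤ ENNReal.ofReal ((23 / 20) * (((69:ℝ) / 50) ^ 32 / 2 ^ 15) ^ m) := by
        apply ENNReal.ofReal_le_ofReal
        have hterm : ∀ f ∈ s, Wt (stL (List.ofFn f)) ≤
            (2:ℝ) ^ ((List.ofFn f).count 0) * Wt (stL (List.ofFn f)) / 2 ^ (15 * m) := by
          intro f hf
          rw [hs, Finset.mem_filter] at hf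
          have hlen : (List.ofFn f).length = 32 * m := by simp
          have hz : 15 * m ≤ (List.ofFn f).count 0 := by
            have := count_add (List.ofFn f)
            omega
          rw [le_div_iff₀ (by positivity)]
          rw [mul_comm ((2:ℝ) ^ _) _]
          apply mul_le_mul_of_nonneg_left _ (Wt_pos _ (Pinv_stL _)).le
          exact pow_le_pow_right₀ (by norm_num) hz
        calc ∑ f ∈ s, Wt (stL (List.ofFn f))
            ≤ ∑ f ∈ s, (2:ℝ) ^ ((List.ofFn f).count 0) * Wt (stL (List.ofFn f)) / 2 ^ (15 * m) :=
              Finset.sum_le_sum hterm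
          _ = (∑ f ∈ s, (2:ℝ) ^ ((List.ofFn f).count 0) * Wt (stL (List.ofFn f))) / 2 ^ (15 * m) := by
              rw [Finset.sum_div]
          _ ≤ (∑ f : Fin (32 * m) → Fin 2,
                (2:ℝ) ^ ((List.ofFn f).count 0) * Wt (stL (List.ofFn f))) / 2 ^ (15 * m) := by
              exact (div_le_div_iff_of_pos_right (by positivity)).mpr
                (Finset.sum_le_sum_of_subset_of_nonneg (Finset.subset_univ s)
                  (fun f _ _ => mul_nonneg (by positivity) (Wt_pos _ (Pinv_stL _)).le))
          _ ≤ ((69 / 50) ^ (32 * m) * (23 / 20)) / 2 ^ (15 * m) := by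
              gcongr
              exact sum_bound _
          _ = (23 / 20) * (((69:ℝ) / 50) ^ 32 / 2 ^ 15) ^ m := by
              have hpw : ((69:ℝ)/50) ^ (32 * m) / 2 ^ (15 * m) =
                  (((69:ℝ)/50) ^ 32 / 2 ^ 15) ^ m := by
                rw [pow_mul, pow_mul, ← div_pow]
              rw [mul_comm (((69:ℝ)/50) ^ (32*m)) ((23:ℝ)/20), mul_div_assoc, hpw]

/-- The set of points of the open triangle Δ = {1 > x > y > 0} possessing a normal
Farey (e,e,e) TRIP sequence (frequency of ones tending to 1/2) has Lebesgue measure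
zero. -/
theorem stmt14 :
    volume {z : ℝ × ℝ | (z.2 < z.1 ∧ z.1 < 1 ∧ 0 < z.2) ∧
      ∃ i : ℕ → Fin 2,
        (∀ n : ℕ, 1 ≤ n → z ∈ subTri Feee i n) ∧
        Tendsto
          (fun n : ℕ =>
            (((Finset.range n).filter fun k => i (k + 1) = 1).card : ℝ) / n)
          atTop (nhds (1 / 2))} = 0 := by
  classical
  set S := {z : ℝ × ℝ | (z.2 < z.1 ∧ z.1 < 1 ∧ 0 < z.2) ∧
      ∃ i : ℕ → Fin 2,
        (∀ n : ℕ, 1 ≤ n → z ∈ subTri Feee i n) ∧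
        Tendsto
          (fun n : ℕ =>
            (((Finset.range n).filter fun k => i (k + 1) = 1).card : ℝ) / n)
          atTop (nhds (1 / 2))} with hS
  set K : ℕ → Set (ℝ × ℝ) := fun N => ⋂ m, ⋂ (_ : N ≤ m), UU (m + 1) with hK
  have hcov : S ⊆ ⋃ N, K N := by
    rintro z ⟨-, i, hmem, hfreq⟩
    have hev : ∀ᶠ n in atTop,
        (((Finset.range n).filter fun k => i (k + 1) = 1).card : ℝ) / n ≤ 17 / 32 :=
      hfreq.eventually (eventually_le_nhds (by norm_num))
    obtain ⟨N₀, hN₀⟩ := eventually_atTop.mp hev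
    refine Set.mem_iUnion.2 ⟨N₀, Set.mem_iInter.2 fun m => Set.mem_iInter.2 fun hm => ?_⟩
    set n := 32 * (m + 1) with hn
    have hnN : N₀ ≤ n := le_trans hm (by omega)
    have hcard : ((Finset.range n).filter fun k => i (k + 1) = 1).card ≤ 17 * (m + 1) := by
      have h1 := hN₀ n hnN
      have hnpos : (0:ℝ) < (n:ℝ) := by positivity
      rw [div_le_iff₀ hnpos] at h1
      have : (((Finset.range n).filter fun k => i (k + 1) = 1).card : ℝ) ≤ 17 * (m + 1) := by
        rw [hn] at h1 ⊢
        push_cast at h1 ⊢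
        linarith
      exact_mod_cast this
    have hz : z ∈ TriL (wd i n) := by
      rw [← subTri_eq_TriL]
      exact hmem n (by omega)
    obtain ⟨f, hf⟩ : ∃ f : Fin (32 * (m + 1)) → Fin 2, List.ofFn f = wd i n :=
      exists_ofFn _ _ (by rw [wd_length])
    refine Set.mem_iUnion₂.2 ⟨f, Finset.mem_filter.2 ⟨Finset.mem_univ _, by
        rw [hf, count_one_wd]; exact hcard⟩, by rw [hf]; exact hz⟩
  have hKnull : ∀ N, volume (K N) = 0 := by
    intro N
    set q : ℝ := ((69:ℝ) / 50) ^ 32 / 2 ^ 15 with hq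
    have hq0 : 0 ≤ q := by positivity
    have hq1 : q < 1 := by
      rw [hq, div_lt_one (by positivity), div_pow]
      rw [div_lt_iff₀ (by positivity)]
      norm_num
    have hbound : ∀ m, N ≤ m → volume (K N) ≤ ENNReal.ofReal ((23 / 20) * q ^ (m + 1)) := by
      intro m hm
      refine le_trans (measure_mono ?_) (vol_UU (m + 1))
      exact Set.iInter_subset_of_subset m (Set.iInter_subset _ hm)
    have htend : Tendsto (fun m : ℕ => ENNReal.ofReal ((23 / 20) * q ^ (m + 1)))
        atTop (nhds 0) := by
      have h1 : Tendsto (fun m : ℕ => (23 / 20) * q ^ (m + 1)) atTop (nhds 0) := by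
        have h2 : Tendsto (fun m : ℕ => q ^ m) atTop (nhds 0) :=
          tendsto_pow_atTop_nhds_zero_of_lt_one hq0 hq1
        have h3 := (h2.comp (tendsto_add_atTop_nat 1)).const_mul (23 / 20 : ℝ)
        simpa using h3
      have := (ENNReal.continuous_ofReal.tendsto 0).comp h1
      simpa [Function.comp_def] using this
    have : volume (K N) ≤ 0 := by
      apply ge_of_tendsto htend
      filter_upwards [eventually_atTop.2 ⟨N, fun m hm => hbound m hm⟩] with m h using h
    exact le_antisymm this zero_le
  refine le_antisymm ?_ zero_le
  calc volume S ≤ volume (⋃ N, K N) := measure_mono hcov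
    _ = 0 := measure_iUnion_null hKnull
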